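/- Let A be an m×n real matrix partitioned as A = [[A₁₁, A₁₂],[A₂₁, A₂₂]] with A₁₁ a nonsingular k×k block, k < min(m,n), having local ρ-maximum volume in A for some ρ ≥ 1. Then ‖A/A₁₁‖_C ≤ ρ(k+1)·σ_{k+1}(A). -/

import Mathlib

open Matrix

/-- The maximum absolute entry norm `‖·‖_C` of a matrix. -/
noncomputable def cnorm {m n : Type*} [Fintype m] [Fintype n]
    (M : Matrix m n ℝ) : ℝ := ⨆ i, ⨆ j, |M i j|

/-- The `k`-th largest value (1-indexed) of a finite family of reals. -/
noncomputable def kthLargest {ι : Type*} [Fintype ι] (f : ι → ℝ) (k : ℕ) : ℝ :=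
  ((Finset.univ.val.map f).sort (· ≤ ·)).getD (Fintype.card ι - k) 0

lemma countP_le_of_sorted_lt {l : List ℝ} (hs : l.Pairwise (· ≤ ·)) {p : ℕ} (hp : p < l.length)
    {t : ℝ} (h : l[p] < t) :
    l.countP (fun x => decide (t ≤ x)) ≤ l.length - (p + 1) := by
  calc l.countP (fun x => decide (t ≤ x))
      = (l.take (p+1)).countP (fun x => decide (t ≤ x))
        + (l.drop (p+1)).countP (fun x => decide (t ≤ x)) := by
        rw [← List.countP_append, List.take_append_drop]
    _ ≤ 0 + (l.drop (p+1)).length := by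
        gcongr
        · rw [Nat.le_zero, List.countP_eq_zero]
          intro x hx
          obtain ⟨i, hi, rfl⟩ := List.mem_iff_getElem.1 hx
          rw [List.length_take] at hi
          have hi' : i < l.length := by omega
          have hile : i ≤ p := by omega
          rw [List.getElem_take]
          have : l[i] ≤ l[p] := by
            have := hs.rel_get_of_le (a := ⟨i, hi'⟩) (b := ⟨p, hp⟩) (by exact hile)
            simpa using this
          simp only [decide_eq_true_eq]
          push_neg
          exact lt_of_le_of_lt this h
        · exact List.countP_le_length
    _ = l.length - (p + 1) := by rw [List.length_drop]; omega

lemma le_kthLargest_of_card {ι : Type*} [Fintype ι] (f : ι → ℝ) (K : ℕ) (t : ℝ)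
    (hK1 : 1 ≤ K) (hK : K ≤ Fintype.card ι)
    (h : K ≤ (Finset.univ.filter (fun i => t ≤ f i)).card) : t ≤ kthLargest f K := by
  classical
  have hlen : ((Finset.univ.val.map f).sort (· ≤ ·)).length = Fintype.card ι := by
    rw [Multiset.length_sort, Multiset.card_map]
    simp [Finset.card_univ]
  have hidx : Fintype.card ι - K < ((Finset.univ.val.map f).sort (· ≤ ·)).length := by omega
  by_contra hcon
  push_neg at hcon
  rw [kthLargest, List.getD_eq_getElem _ _ hidx] at hcon
  have hcount : ((Finset.univ.val.map f).sort (· ≤ ·)).countP (fun x => decide (t ≤ x))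
      ≤ ((Finset.univ.val.map f).sort (· ≤ ·)).length - (Fintype.card ι - K + 1) :=
    countP_le_of_sorted_lt (Multiset.pairwise_sort _ _) hidx hcon
  have hlcount : K ≤ ((Finset.univ.val.map f).sort (· ≤ ·)).countP (fun x => decide (t ≤ x)) := by
    calc K ≤ (Finset.univ.filter (fun i => t ≤ f i)).card := h
      _ = Multiset.countP (fun x => t ≤ x) (Finset.univ.val.map f) := by
          rw [Multiset.countP_map]; rfl
      _ = ((Finset.univ.val.map f).sort (· ≤ ·)).countP (fun x => decide (t ≤ x)) := by
          conv_lhs => rw [← Multiset.sort_eq (Finset.univ.val.map f) (· ≤ ·)]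
          rw [Multiset.coe_countP]
  omega

lemma sum_sq_mulVec_le {ι : Type*} [Fintype ι] (M : Matrix ι ι ℝ) {c : ℝ} (hc : 0 ≤ c)
    (hM : ∀ a b, |M a b| ≤ c) (z : ι → ℝ) :
    ∑ a, (M *ᵥ z) a ^ 2 ≤ ((Fintype.card ι) * c)^2 * ∑ b, z b ^ 2 := by
  have habs : ∀ a, |(M *ᵥ z) a| ≤ c * ∑ b, |z b| := by
    intro a
    calc |(M *ᵥ z) a| = |∑ b, M a b * z b| := by simp [Matrix.mulVec, dotProduct]
      _ ≤ ∑ b, |M a b * z b| := Finset.abs_sum_le_sum_abs _ _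
      _ ≤ ∑ b, c * |z b| := by
          apply Finset.sum_le_sum
          intro b _
          rw [abs_mul]
          exact mul_le_mul_of_nonneg_right (hM a b) (abs_nonneg _)
      _ = c * ∑ b, |z b| := by rw [Finset.mul_sum]
  have hterm : ∀ a : ι, (M *ᵥ z) a ^ 2 ≤ c^2 * ((Fintype.card ι) * ∑ b, z b ^ 2) := by
    intro a
    calc (M *ᵥ z) a ^ 2 = |(M *ᵥ z) a| ^ 2 := (sq_abs _).symm
      _ ≤ (c * ∑ b, |z b|) ^ 2 := by
          apply pow_le_pow_left₀ (abs_nonneg _) (habs a)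
      _ = c^2 * (∑ b, |z b|) ^ 2 := by ring
      _ ≤ c^2 * ((Fintype.card ι) * ∑ b, z b ^ 2) := by
          apply mul_le_mul_of_nonneg_left _ (sq_nonneg c)
          have := sq_sum_le_card_mul_sum_sq (s := (Finset.univ : Finset ι)) (f := fun b => |z b|)
          simpa [Finset.card_univ, sq_abs] using this
  calc ∑ a, (M *ᵥ z) a ^ 2 ≤ ∑ _a : ι, c^2 * ((Fintype.card ι) * ∑ b, z b ^ 2) :=
        Finset.sum_le_sum (fun a _ => hterm a)
    _ = ((Fintype.card ι) * c)^2 * ∑ b, z b ^ 2 := by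
        rw [Finset.sum_const, Finset.card_univ]
        push_cast
        ring

lemma dp_sq (κ : Type*) [Fintype κ] (v : κ → ℝ) : v ⬝ᵥ v = ∑ i, v i ^ 2 := by
  simp [dotProduct, sq]

lemma spectral_facts {ι κ : Type*} [Fintype ι] [Fintype κ] [DecidableEq κ]
    (A : Matrix ι κ ℝ) :
    ∃ U : Matrix κ κ ℝ,
      (∀ x : κ → ℝ, ∑ i, ((Uᵀ *ᵥ x) i)^2 = ∑ i, (x i)^2) ∧
      (∀ x : κ → ℝ, ∑ r, ((A *ᵥ x) r)^2
         = ∑ i, (Matrix.isHermitian_conjTranspose_mul_self A).eigenvalues i * ((Uᵀ *ᵥ x) i)^2) := by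
  have hH := Matrix.isHermitian_conjTranspose_mul_self A
  set U : Matrix κ κ ℝ := (hH.eigenvectorUnitary : Matrix κ κ ℝ) with hUdef
  have hstar : star U = Uᵀ := by
    rw [Matrix.star_eq_conjTranspose, Matrix.conjTranspose_eq_transpose_of_trivial]
  have hU2 : U * Uᵀ = 1 := by
    rw [← hstar]
    exact Matrix.mem_unitaryGroup_iff.mp hH.eigenvectorUnitary.2
  refine ⟨U, fun x => ?_, fun x => ?_⟩
  · calc ∑ i, ((Uᵀ *ᵥ x) i)^2 = (Uᵀ *ᵥ x) ⬝ᵥ (Uᵀ *ᵥ x) := (dp_sq _ _).symm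
      _ = ((Uᵀ *ᵥ x) ᵥ* Uᵀ) ⬝ᵥ x := dotProduct_mulVec _ _ _
      _ = ((U * Uᵀ) *ᵥ x) ⬝ᵥ x := by rw [vecMul_transpose, mulVec_mulVec]
      _ = x ⬝ᵥ x := by rw [hU2, one_mulVec]
      _ = ∑ i, (x i)^2 := dp_sq _ _
  · have hspec : Aᵀ * A = U * diagonal hH.eigenvalues * Uᵀ := by
      rw [← hstar]
      have h1 := hH.spectral_theorem
      simp only [RCLike.ofReal_real_eq_id, Function.id_comp, Unitary.conjStarAlgAut_apply] at h1
      rw [← Matrix.conjTranspose_eq_transpose_of_trivial]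
      exact h1
    calc ∑ r, ((A *ᵥ x) r)^2 = (A *ᵥ x) ⬝ᵥ (A *ᵥ x) := (dp_sq _ _).symm
      _ = (x ᵥ* Aᵀ) ⬝ᵥ (A *ᵥ x) := by rw [vecMul_transpose]
      _ = x ⬝ᵥ (Aᵀ *ᵥ (A *ᵥ x)) := (dotProduct_mulVec _ _ _).symm
      _ = x ⬝ᵥ ((Aᵀ * A) *ᵥ x) := by rw [mulVec_mulVec]
      _ = x ⬝ᵥ (U *ᵥ (diagonal hH.eigenvalues *ᵥ (Uᵀ *ᵥ x))) := by
          rw [hspec, mulVec_mulVec, mulVec_mulVec]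
      _ = (x ᵥ* U) ⬝ᵥ (diagonal hH.eigenvalues *ᵥ (Uᵀ *ᵥ x)) := dotProduct_mulVec _ _ _
      _ = (Uᵀ *ᵥ x) ⬝ᵥ (diagonal hH.eigenvalues *ᵥ (Uᵀ *ᵥ x)) := by rw [mulVec_transpose]
      _ = ∑ i, hH.eigenvalues i * ((Uᵀ *ᵥ x) i)^2 := by
          simp only [dotProduct, mulVec_diagonal]
          exact Finset.sum_congr rfl (fun i _ => by ring)

lemma inv_entry_bound {k : ℕ} (Ahat : Matrix (Fin k ⊕ Unit) (Fin k ⊕ Unit) ℝ)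
    (ρ d s : ℝ) (hd : d ≠ 0) (hs : s ≠ 0)
    (hminor : ∀ r c : Fin k → Fin k ⊕ Unit, Function.Injective r → Function.Injective c →
      |(Ahat.submatrix r c).det| ≤ ρ * |d|)
    (hdet : Ahat.det = d * s) (a b : Fin k ⊕ Unit) :
    |Ahat⁻¹ a b| ≤ ρ / |s| := by
  have e : Fin (k + 1) ≃ Fin k ⊕ Unit :=
    finSumFinEquiv.symm.trans (Equiv.sumCongr (Equiv.refl (Fin k)) finOneEquiv)
  set B := Ahat.submatrix e e with hB
  have hAhat : Ahat = B.submatrix e.symm e.symm := by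
    rw [hB, submatrix_submatrix, Equiv.self_comp_symm, submatrix_id_id]
  have habs : ∀ i j, |B.adjugate i j| ≤ ρ * |d| := by
    intro i j
    rw [Matrix.adjugate_fin_succ_eq_det_submatrix]
    rw [abs_mul, abs_pow, abs_neg, abs_one, one_pow, one_mul]
    rw [hB, submatrix_submatrix]
    exact hminor _ _ (e.injective.comp Fin.succAbove_right_injective)
      (e.injective.comp Fin.succAbove_right_injective)
  have hadj : |Ahat.adjugate a b| ≤ ρ * |d| := by
    conv_lhs => rw [hAhat, adjugate_submatrix_equiv_self]
    exact habs _ _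
  have hAinv : Ahat⁻¹ a b = (Ahat.det)⁻¹ * Ahat.adjugate a b := by
    rw [inv_def, Ring.inverse_eq_inv', Matrix.smul_apply, smul_eq_mul]
  rw [hAinv, abs_mul, abs_inv, hdet, abs_mul]
  calc (|d| * |s|)⁻¹ * |Ahat.adjugate a b| ≤ (|d| * |s|)⁻¹ * (ρ * |d|) := by
        apply mul_le_mul_of_nonneg_left hadj
        positivity
    _ = ρ / |s| := by
        rw [mul_inv]
        field_simp [abs_ne_zero.mpr hd, abs_ne_zero.mpr hs]


noncomputable def extLin {k n₂ : ℕ} (q : Fin n₂) :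
    ((Fin k ⊕ Unit) → ℝ) →ₗ[ℝ] ((Fin k ⊕ Fin n₂) → ℝ) where
  toFun y := Sum.elim (fun a => y (Sum.inl a)) (fun c => if c = q then y (Sum.inr ()) else 0)
  map_add' y z := by
    funext c
    cases c with
    | inl a => simp
    | inr c =>
      simp only [Sum.elim_inr, Pi.add_apply]
      split_ifs <;> simp
  map_smul' r y := by
    funext c
    cases c with
    | inl a => simp
    | inr c =>
      simp only [Sum.elim_inr, Pi.smul_apply, RingHom.id_apply, smul_eq_mul]
      split_ifs <;> simp
/-- The `k`-th largest singular value (1-indexed) of a real matrix,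
i.e. the square root of the `k`-th largest eigenvalue of `Aᴴ * A`. -/
noncomputable def singularValue {m n : Type*} [Fintype m] [Fintype n] [DecidableEq n]
    (A : Matrix m n ℝ) (k : ℕ) : ℝ :=
  Real.sqrt (kthLargest (Matrix.isHermitian_conjTranspose_mul_self A).eigenvalues k)

/-- Let `A = [[A₁₁, A₁₂], [A₂₁, A₂₂]]` be an `m × n` real matrix with `A₁₁` a nonsingular
`k × k` block, `k < min(m,n)`, having local `ρ`-maximum volume in `A` for some `ρ ≥ 1`
(i.e. `A₁₁` has global `ρ`-maximum volume in every `(k+1) × (k+1)` submatrix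
`Ahat p q = [[A₁₁, A₁₂ col q], [A₂₁ row p, A₂₂ p q]]` of `A` containing `A₁₁`).
Then `‖A/A₁₁‖_C ≤ ρ (k+1) σ_{k+1}(A)`. -/
theorem schur_cnorm_le_of_local_maxvol {k m₂ n₂ : ℕ} (hm : 0 < m₂) (hn : 0 < n₂)
    (A₁₁ : Matrix (Fin k) (Fin k) ℝ) (A₁₂ : Matrix (Fin k) (Fin n₂) ℝ)
    (A₂₁ : Matrix (Fin m₂) (Fin k) ℝ) (A₂₂ : Matrix (Fin m₂) (Fin n₂) ℝ)
    (hA : IsUnit A₁₁.det) (ρ : ℝ) (hρ : 1 ≤ ρ)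
    (hloc : ∀ (p : Fin m₂) (q : Fin n₂) (r c : Fin k → Fin k ⊕ Unit),
      Function.Injective r → Function.Injective c →
      |((Matrix.fromBlocks A₁₁ (Matrix.of fun i (_ : Unit) => A₁₂ i q)
          (Matrix.of fun (_ : Unit) j => A₂₁ p j)
          (Matrix.of fun (_ : Unit) (_ : Unit) => A₂₂ p q)).submatrix r c).det|
        ≤ ρ * |A₁₁.det|) :
    cnorm (A₂₂ - A₂₁ * A₁₁⁻¹ * A₁₂) ≤
      ρ * (k + 1) * singularValue (Matrix.fromBlocks A₁₁ A₁₂ A₂₁ A₂₂) (k + 1) := by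
  classical
  haveI hne1 : Nonempty (Fin m₂) := ⟨⟨0, hm⟩⟩
  haveI hne2 : Nonempty (Fin n₂) := ⟨⟨0, hn⟩⟩
  have hρ0 : (0:ℝ) < ρ := lt_of_lt_of_le one_pos hρ
  have hk1 : (0:ℝ) < (k:ℝ) + 1 := by positivity
  have hd : A₁₁.det ≠ 0 := by
    intro h0
    rw [h0] at hA
    simpa using hA
  have hsv : 0 ≤ singularValue (Matrix.fromBlocks A₁₁ A₁₂ A₂₁ A₂₂) (k + 1) :=
    Real.sqrt_nonneg _
  have hRnn : 0 ≤ ρ * ((k:ℝ) + 1) * singularValue (Matrix.fromBlocks A₁₁ A₁₂ A₂₁ A₂₂) (k+1) := by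
    positivity
  suffices key : ∀ (p : Fin m₂) (q : Fin n₂),
      |(A₂₂ - A₂₁ * A₁₁⁻¹ * A₁₂) p q| ≤
        ρ * (k + 1) * singularValue (Matrix.fromBlocks A₁₁ A₁₂ A₂₁ A₂₂) (k+1) by
    simp only [cnorm]
    exact ciSup_le fun i => ciSup_le fun j => key i j
  intro p q
  set Af := Matrix.fromBlocks A₁₁ A₁₂ A₂₁ A₂₂ with hAfdef
  set Ahat := Matrix.fromBlocks A₁₁ (Matrix.of fun i (_ : Unit) => A₁₂ i q)
          (Matrix.of fun (_ : Unit) j => A₂₁ p j)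
          (Matrix.of fun (_ : Unit) (_ : Unit) => A₂₂ p q) with hAhdef
  set s := (A₂₂ - A₂₁ * A₁₁⁻¹ * A₁₂) p q with hsdef
  haveI := A₁₁.invertibleOfIsUnitDet hA
  have hdet : Ahat.det = A₁₁.det * s := by
    rw [hAhdef, Matrix.det_fromBlocks₁₁]
    congr 1
    rw [Matrix.det_unique]
    show (Matrix.of fun (_:Unit) (_:Unit) => A₂₂ p q) () ()
        - ((Matrix.of fun (_ : Unit) j => A₂₁ p j) * ⅟A₁₁ * (Matrix.of fun i (_ : Unit) => A₁₂ i q)) () ()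
        = s
    rw [hsdef, invOf_eq_nonsing_inv]
    simp only [Matrix.sub_apply, Matrix.mul_apply, Matrix.of_apply]
  rcases eq_or_ne s 0 with h0 | hs0
  · rw [h0, abs_zero]; exact hRnn
  · have hmin := hloc p q
    have hinv : ∀ a b, |Ahat⁻¹ a b| ≤ ρ / |s| := fun a b =>
      inv_entry_bound Ahat ρ A₁₁.det s hd hs0 hmin hdet a b
    have hAhdet2 : IsUnit Ahat.det := by
      rw [hdet]; exact isUnit_iff_ne_zero.2 (mul_ne_zero hd hs0)
    have hsabs : (0:ℝ) < |s| := abs_pos.mpr hs0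
    set t := (|s| / (ρ * ((k:ℝ) + 1)))^2 with htdef
    have ht0 : 0 < t := by rw [htdef]; positivity
    have hcard : ((Fintype.card (Fin k ⊕ Unit) : ℕ) : ℝ) = (k:ℝ) + 1 := by simp
    have claim1 : ∀ y : (Fin k ⊕ Unit) → ℝ,
        t * ∑ b, (y b)^2 ≤ ∑ a, ((Ahat *ᵥ y) a)^2 := by
      intro y
      have hy : Ahat⁻¹ *ᵥ (Ahat *ᵥ y) = y := by
        rw [mulVec_mulVec, Matrix.nonsing_inv_mul _ hAhdet2, one_mulVec]
      have hb := sum_sq_mulVec_le Ahat⁻¹ (c := ρ/|s|) (by positivity) hinv (Ahat *ᵥ y)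
      rw [hy, hcard] at hb
      have h1 : |s| ≠ 0 := abs_ne_zero.mpr hs0
      have hconst : t * ((((k:ℝ)+1) * (ρ/|s|))^2) = 1 := by
        rw [htdef]; field_simp
      calc t * ∑ b, (y b)^2
          ≤ t * ((((k:ℝ)+1) * (ρ/|s|))^2 * ∑ a, ((Ahat *ᵥ y) a)^2) :=
            mul_le_mul_of_nonneg_left hb ht0.le
        _ = ∑ a, ((Ahat *ᵥ y) a)^2 := by rw [← mul_assoc, hconst, one_mul]
    have hexl_inl : ∀ (y : (Fin k ⊕ Unit) → ℝ) (a : Fin k),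
        (extLin (k:=k) q y) (Sum.inl a) = y (Sum.inl a) := by
      intro y a; rfl
    have hexl_inr : ∀ (y : (Fin k ⊕ Unit) → ℝ) (c : Fin n₂),
        (extLin (k:=k) q y) (Sum.inr c) = if c = q then y (Sum.inr ()) else 0 := by
      intro y c; rfl
    have hxy : ∀ y : (Fin k ⊕ Unit) → ℝ,
        ∑ c, ((extLin (k:=k) q y) c)^2 = ∑ b, (y b)^2 := by
      intro y
      rw [Fintype.sum_sum_type, Fintype.sum_sum_type]
      have h1 : ∀ c : Fin n₂, ((extLin (k:=k) q y) (Sum.inr c))^2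
          = if c = q then (y (Sum.inr ()))^2 else 0 := by
        intro c; rw [hexl_inr]; split_ifs <;> simp
      rw [Finset.sum_congr rfl (fun c _ => h1 c), Finset.sum_ite_eq' Finset.univ q]
      simp [hexl_inl]
    have hrow1 : ∀ (y : (Fin k ⊕ Unit) → ℝ) (a : Fin k),
        (Af *ᵥ (extLin (k:=k) q y)) (Sum.inl a) = (Ahat *ᵥ y) (Sum.inl a) := by
      intro y a
      show Af (Sum.inl a) ⬝ᵥ (extLin (k:=k) q y) = Ahat (Sum.inl a) ⬝ᵥ y
      simp only [dotProduct, Fintype.sum_sum_type]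
      congr 1
      calc ∑ c : Fin n₂, Af (Sum.inl a) (Sum.inr c) * (extLin (k:=k) q y) (Sum.inr c)
          = ∑ c : Fin n₂, (if c = q then A₁₂ a c * y (Sum.inr ()) else 0) := by
            apply Finset.sum_congr rfl
            intro c _
            show A₁₂ a c * (if c = q then y (Sum.inr ()) else 0) = _
            rw [mul_ite, mul_zero]
        _ = A₁₂ a q * y (Sum.inr ()) := by
            rw [Finset.sum_ite_eq' Finset.univ q]
            simp
        _ = ∑ u : Unit, Ahat (Sum.inl a) (Sum.inr u) * y (Sum.inr u) := by
            simp only [Finset.univ_unique, Finset.sum_singleton]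
            rfl
    have hrow2 : ∀ (y : (Fin k ⊕ Unit) → ℝ),
        (Af *ᵥ (extLin (k:=k) q y)) (Sum.inr p) = (Ahat *ᵥ y) (Sum.inr ()) := by
      intro y
      show Af (Sum.inr p) ⬝ᵥ (extLin (k:=k) q y) = Ahat (Sum.inr ()) ⬝ᵥ y
      simp only [dotProduct, Fintype.sum_sum_type]
      congr 1
      calc ∑ c : Fin n₂, Af (Sum.inr p) (Sum.inr c) * (extLin (k:=k) q y) (Sum.inr c)
          = ∑ c : Fin n₂, (if c = q then A₂₂ p c * y (Sum.inr ()) else 0) := by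
            apply Finset.sum_congr rfl
            intro c _
            show A₂₂ p c * (if c = q then y (Sum.inr ()) else 0) = _
            rw [mul_ite, mul_zero]
        _ = A₂₂ p q * y (Sum.inr ()) := by
            rw [Finset.sum_ite_eq' Finset.univ q]
            simp
        _ = ∑ u : Unit, Ahat (Sum.inr ()) (Sum.inr u) * y (Sum.inr u) := by
            simp only [Finset.univ_unique, Finset.sum_singleton]
            rfl
    have claim2 : ∀ y : (Fin k ⊕ Unit) → ℝ,
        t * ∑ b, (y b)^2 ≤ ∑ r, ((Af *ᵥ (extLin (k:=k) q y)) r)^2 := by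
      intro y
      refine le_trans (claim1 y) ?_
      rw [Fintype.sum_sum_type (f := fun a => ((Ahat *ᵥ y) a)^2),
          Fintype.sum_sum_type (f := fun r => ((Af *ᵥ (extLin (k:=k) q y)) r)^2)]
      apply add_le_add
      · exact le_of_eq (Finset.sum_congr rfl (fun a _ => by rw [hrow1 y a]))
      · calc ∑ u : Unit, ((Ahat *ᵥ y) (Sum.inr u))^2
            = ((Af *ᵥ (extLin (k:=k) q y)) (Sum.inr p))^2 := by
              rw [hrow2 y]; simp
          _ ≤ ∑ i, ((Af *ᵥ (extLin (k:=k) q y)) (Sum.inr i))^2 :=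
              Finset.single_le_sum
                (f := fun i : Fin m₂ => ((Af *ᵥ (extLin (k:=k) q y)) (Sum.inr i))^2)
                (fun i _ => sq_nonneg _) (Finset.mem_univ p)
    obtain ⟨U, hU1, hU2⟩ := spectral_facts Af
    set lam := (Matrix.isHermitian_conjTranspose_mul_self Af).eigenvalues with hlam
    have hgoal : singularValue Af (k+1) = Real.sqrt (kthLargest lam (k+1)) := rfl
    rw [hgoal]
    by_cases hbc : k + 1 ≤ (Finset.univ.filter (fun i => t ≤ lam i)).card
    · have hμ : t ≤ kthLargest lam (k+1) :=
        le_kthLargest_of_card lam (k+1) t (by omega)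
          (by simp only [Fintype.card_sum, Fintype.card_fin]; omega) hbc
      have h1 : Real.sqrt t ≤ Real.sqrt (kthLargest lam (k+1)) := Real.sqrt_le_sqrt hμ
      rw [htdef, Real.sqrt_sq (by positivity)] at h1
      rw [div_le_iff₀ (by positivity)] at h1
      calc |s| ≤ Real.sqrt (kthLargest lam (k+1)) * (ρ * ((k:ℝ)+1)) := h1
        _ = ρ * ((k:ℝ)+1) * Real.sqrt (kthLargest lam (k+1)) := by ring
    · push_neg at hbc
      exfalso
      set T : ((Fin k ⊕ Unit) → ℝ) →ₗ[ℝ]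
          ({i // i ∈ Finset.univ.filter (fun i => t ≤ lam i)} → ℝ) :=
        (LinearMap.funLeft ℝ ℝ Subtype.val) ∘ₗ (Matrix.mulVecLin Uᵀ) ∘ₗ (extLin (k:=k) q)
        with hT
      have hker : LinearMap.ker T ≠ ⊥ := by
        intro hcontra
        have h1 := LinearMap.finrank_range_add_finrank_ker T
        rw [hcontra, finrank_bot, add_zero, Module.finrank_pi] at h1
        have h2 : Module.finrank ℝ (LinearMap.range T) ≤
            Module.finrank ℝ ({i // i ∈ Finset.univ.filter (fun i => t ≤ lam i)} → ℝ) :=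
          Submodule.finrank_le _
        rw [Module.finrank_pi, Fintype.card_coe] at h2
        rw [h1] at h2
        simp only [Fintype.card_sum, Fintype.card_fin, Fintype.card_unit] at h2
        omega
      obtain ⟨y, hyk, hy0⟩ := (Submodule.ne_bot_iff _).1 hker
      have hxc : ∀ i, t ≤ lam i → (Uᵀ *ᵥ (extLin (k:=k) q y)) i = 0 := by
        intro i hi
        have h3 : T y = 0 := hyk
        have h4 := congrFun h3 ⟨i, by simp [hi]⟩
        simpa [hT, LinearMap.funLeft_apply, Matrix.mulVecLin_apply, Matrix.mulVec_transpose] using h4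
      have hx0 : ∃ c0, (extLin (k:=k) q y) c0 ≠ 0 := by
        by_contra hc; push_neg at hc
        apply hy0
        funext b
        cases b with
        | inl a => rw [← hexl_inl y a]; exact hc (Sum.inl a)
        | inr u =>
          cases u
          have h5 := hc (Sum.inr q)
          rw [hexl_inr] at h5
          simpa using h5
      have hsumx : 0 < ∑ c, ((extLin (k:=k) q y) c)^2 := by
        obtain ⟨c0, hc0⟩ := hx0
        exact Finset.sum_pos' (fun c _ => sq_nonneg _)
          ⟨c0, Finset.mem_univ _, by positivity⟩
      have hsum_c : ∑ i, ((Uᵀ *ᵥ (extLin (k:=k) q y)) i)^2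
          = ∑ c, ((extLin (k:=k) q y) c)^2 := hU1 _
      have hex : ∃ i0, lam i0 < t ∧ (Uᵀ *ᵥ (extLin (k:=k) q y)) i0 ≠ 0 := by
        by_contra hse; push_neg at hse
        have hall : ∀ i, (Uᵀ *ᵥ (extLin (k:=k) q y)) i = 0 := by
          intro i
          by_cases hi : t ≤ lam i
          · exact hxc i hi
          · exact hse i (lt_of_not_ge hi)
        rw [← hsum_c] at hsumx
        simp only [hall] at hsumx
        simp at hsumx
      obtain ⟨i0, hi0lt, hi0ne⟩ := hex
      have hlt : ∑ i, lam i * ((Uᵀ *ᵥ (extLin (k:=k) q y)) i)^2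
          < ∑ i, t * ((Uᵀ *ᵥ (extLin (k:=k) q y)) i)^2 := by
        apply Finset.sum_lt_sum
        · intro i _
          by_cases hi : t ≤ lam i
          · rw [hxc i hi]; simp
          · exact mul_le_mul_of_nonneg_right (lt_of_not_ge hi).le (sq_nonneg _)
        · exact ⟨i0, Finset.mem_univ _,
            mul_lt_mul_of_pos_right hi0lt (by positivity)⟩
      have hge := claim2 y
      rw [hU2 (extLin (k:=k) q y)] at hge
      have heq2 : ∑ i, t * ((Uᵀ *ᵥ (extLin (k:=k) q y)) i)^2 = t * ∑ b, (y b)^2 := by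
        rw [← Finset.mul_sum, hsum_c, hxy y]
      linarith
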